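/- Let Φ ⊆ Σ^{□k} be a non-conflictual set of tagged k-words, let h = ⌈k/2⌉, and let F_h = σ(Φ) be the set of tag-erasures of words of Φ. Then the h-strictly-locally-testable language Loc(F_h) over Σ contains the maximal language Red(Φ). -/

import Mathlib

/-!
Common framework from the paper "Higher-order Operator Precedence Languages":
tagged words over an alphabet `α` (with a distinguished end-mark letter
`hash`), the tag set Δ = {[, ], ⊙}, tagged `k`-word factors, conflictual sets,
the strictly-locally-testable tagged language `Loc(Φ)`, handles, reductions
`⇝_Φ`, and the (tagged) maximal languages `RedBar Φ` / `Red Φ`.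

Conventions: an end-word `⍟` is the alternating word `(#⊙)^m #` of (tagged)
length `k-2`, so that it contributes `(k-1)/2` end-marks on each side,
matching all the examples of the paper.
-/

namespace HOP

/-- The three tags `[`, `]`, `⊙`. -/
inductive Tagg : Type where
  | lb : Tagg
  | rb : Tagg
  | dot : Tagg
deriving DecidableEq

/-- Symbols: either a terminal letter of `α` or a tag. -/
abbrev Sym (α : Type) := α ⊕ Tagg

/-- The projection `σ` erasing all tags. -/
def erase {α : Type} (w : List (Sym α)) : List α := w.filterMap Sum.getLeft?

/-- Tagged words: words in `Σ(ΔΣ)*`, i.e. alternating terminals and tags,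
beginning and ending with a terminal. -/
inductive IsTagged {α : Type} : List (Sym α) → Prop where
  | single (a : α) : IsTagged [Sum.inl a]
  | cons (a : α) (t : Tagg) {w : List (Sym α)} :
      IsTagged w → IsTagged (Sum.inl a :: Sum.inr t :: w)

/-- `φ_k(w)`: the set of tagged `k`-words occurring as factors of `w`. -/
def taggedFactors {α : Type} (k : ℕ) (w : List (Sym α)) : Set (List (Sym α)) :=
  {u | u.length = k ∧ IsTagged u ∧ u <:+: w}

/-- A set of tagged words is conflictual iff it contains two distinct words
with the same tag-erasure. -/
def Conflictual {α : Type} (S : Set (List (Sym α))) : Prop :=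
  ∃ x ∈ S, ∃ y ∈ S, x ≠ y ∧ erase x = erase y

def NonConflictual {α : Type} (S : Set (List (Sym α))) : Prop := ¬ Conflictual S

/-- `S` is a set of tagged `k`-words. -/
def TaggedKWords {α : Type} (k : ℕ) (S : Set (List (Sym α))) : Prop :=
  ∀ u ∈ S, IsTagged u ∧ u.length = k

/-- `hashWord hash n = # ⊙ # ⊙ … #` with `n+1` end-marks (tagged length `2n+1`). -/
def hashWord {α : Type} (hash : α) : ℕ → List (Sym α)
  | 0 => [Sum.inl hash]
  | n + 1 => Sum.inl hash :: Sum.inr Tagg.dot :: hashWord hash n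

/-- The end-word `⍟ ∈ (#⊙)*#` used with width `k`: it has tagged length `k-2`
(for odd `k ≥ 3`), i.e. `(k-1)/2` end-marks. -/
def endwFor {α : Type} (hash : α) (k : ℕ) : List (Sym α) := hashWord hash ((k - 3) / 2)

/-- `wrap hash k w = ⍟ [ w ] ⍟`. -/
def wrap {α : Type} (hash : α) (k : ℕ) (w : List (Sym α)) : List (Sym α) :=
  endwFor hash k ++ Sum.inr Tagg.lb :: (w ++ Sum.inr Tagg.rb :: endwFor hash k)

/-- `finalWord hash k = ⍟ ⊙ ⍟`, the target of a complete reduction. -/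
def finalWord {α : Type} (hash : α) (k : ℕ) : List (Sym α) :=
  endwFor hash k ++ Sum.inr Tagg.dot :: endwFor hash k

/-- The (full-word form of the) `k`-strictly-locally-testable tagged language:
all tagged `k`-word factors belong to `Φ`.  A tagged word `w` is in `Loc(Φ)`
in the sense of the paper iff `wrap hash k w ∈ LocFull k Φ`. -/
def LocFull {α : Type} (k : ℕ) (Φ : Set (List (Sym α))) : Set (List (Sym α)) :=
  {w | IsTagged w ∧ taggedFactors k w ⊆ Φ}

/-- `Loc(Φ)` as a set of tagged words `w` (tested on `⍟[w]⍟`). -/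
def LocTagged {α : Type} (hash : α) (k : ℕ) (Φ : Set (List (Sym α))) :
    Set (List (Sym α)) :=
  {w | IsTagged w ∧ wrap hash k w ∈ LocFull k Φ}

/-- The body `x` of a handle `[x]`: a tagged word over `Σ - {#}` whose tags are
all `⊙`. -/
def IsHandleBody {α : Type} (hash : α) (x : List (Sym α)) : Prop :=
  IsTagged x ∧ (∀ t : Tagg, Sum.inr t ∈ x → t = Tagg.dot) ∧ Sum.inl hash ∉ x

/-- One reduction step `w[x]z ⇝_Φ w s z`, allowed when `[x]` is a handle and
both source and target have all their tagged `k`-factors in `Φ`. -/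
def RStep {α : Type} (hash : α) (k : ℕ) (Φ : Set (List (Sym α)))
    (u v : List (Sym α)) : Prop :=
  ∃ w x z, ∃ s : Tagg, IsHandleBody hash x ∧
    u = w ++ Sum.inr Tagg.lb :: (x ++ Sum.inr Tagg.rb :: z) ∧
    v = w ++ Sum.inr s :: z ∧
    u ∈ LocFull k Φ ∧ v ∈ LocFull k Φ

/-- `⇝*_Φ`. -/
def Reduces {α : Type} (hash : α) (k : ℕ) (Φ : Set (List (Sym α))) :
    List (Sym α) → List (Sym α) → Prop :=
  Relation.ReflTransGen (RStep hash k Φ)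

/-- The tagged maximal language `Red̄(Φ)`. -/
def RedBar {α : Type} (hash : α) (k : ℕ) (Φ : Set (List (Sym α))) :
    Set (List (Sym α)) :=
  {w | IsTagged w ∧ Reduces hash k Φ (wrap hash k w) (finalWord hash k)}

/-- The maximal language `Red(Φ) = σ(Red̄(Φ))`. -/
def Red {α : Type} (hash : α) (k : ℕ) (Φ : Set (List (Sym α))) : Set (List α) :=
  erase '' RedBar hash k Φ

/-- Length-`j` factors of a plain word. -/
def plainFactors {α : Type} (j : ℕ) (w : List α) : Set (List α) :=
  {u | u.length = j ∧ u <:+: w}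

/-- The `j`-strictly-locally-testable (plain) language `Loc(F)`, with
end-words `#^(j-1)`; as usual the language is `ε`-free and over `Σ - {#}`. -/
def LocPlain {α : Type} (hash : α) (j : ℕ) (F : Set (List α)) : Set (List α) :=
  {x | x ≠ [] ∧ hash ∉ x ∧
    plainFactors j
      (List.replicate (j - 1) hash ++ x ++ List.replicate (j - 1) hash) ⊆ F}

end HOP

namespace HOP

section Aux

variable {α : Type}

lemma erase_nil : erase ([] : List (Sym α)) = [] := rfl

lemma erase_inl_cons (a : α) (l : List (Sym α)) :
    erase (Sum.inl a :: l) = a :: erase l := by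
  simp [erase]

lemma erase_inr_cons (t : Tagg) (l : List (Sym α)) :
    erase (Sum.inr t :: l) = erase l := by
  rfl

lemma erase_append (u v : List (Sym α)) :
    erase (u ++ v) = erase u ++ erase v := by
  simp [erase]

lemma erase_hashWord (hash : α) (n : ℕ) :
    erase (hashWord hash n) = List.replicate (n + 1) hash := by
  induction n with
  | zero => simp [hashWord, erase]
  | succ n ih =>
      simp [hashWord, erase_inl_cons, erase_inr_cons, ih, List.replicate_succ]

lemma isTagged_hashWord (hash : α) (n : ℕ) : IsTagged (hashWord hash n) := by
  induction n with
  | zero => exact .single hash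
  | succ n ih => exact .cons hash Tagg.dot ih

lemma IsTagged.append_tag {u v : List (Sym α)} (s : Tagg)
    (hu : IsTagged u) (hv : IsTagged v) : IsTagged (u ++ Sum.inr s :: v) := by
  induction hu with
  | single a => exact .cons a s hv
  | cons a t hw ih => simpa using IsTagged.cons a t ih

lemma erase_ne_nil {w : List (Sym α)} (hw : IsTagged w) : erase w ≠ [] := by
  induction hw with
  | single a => simp [erase]
  | cons a t hw ih => simp [erase_inl_cons, erase_inr_cons]

lemma mem_hashWord {hash : α} {n : ℕ} {s : Sym α} (h : s ∈ hashWord hash n) :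
    s = Sum.inl hash ∨ s = Sum.inr Tagg.dot := by
  induction n with
  | zero => simp [hashWord] at h; simp [h]
  | succ n ih =>
      simp only [hashWord, List.mem_cons] at h
      rcases h with h | h | h
      · exact Or.inl h
      · exact Or.inr h
      · exact ih h

/-- Lift a nonempty prefix of the erasure of a tagged word to a tagged
prefix. -/
lemma prefix_lift {W : List (Sym α)} (hW : IsTagged W) :
    ∀ u : List α, u <+: erase W → u ≠ [] →
    ∃ v, v <+: W ∧ IsTagged v ∧ erase v = u ∧ v.length = 2 * u.length - 1 := by
  induction hW with
  | single a =>
      intro u hu hne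
      rw [erase_inl_cons, erase_nil] at hu
      rcases List.sublist_singleton.mp hu.sublist with h | h
      · exact absurd h hne
      · subst h
        exact ⟨[Sum.inl a], List.prefix_refl _, .single a, by simp [erase],
          by simp⟩
  | @cons a t w hw ih =>
      intro u hu hne
      cases u with
      | nil => exact absurd rfl hne
      | cons b u' =>
          rw [erase_inl_cons, erase_inr_cons] at hu
          rcases hu with ⟨s, hs⟩
          have hb : b = a ∧ u' ++ s = erase w := by simpa using hs
          obtain ⟨rfl, hs'⟩ := hb
          by_cases h0 : u' = []
          · subst h0
            exact ⟨[Sum.inl b], ⟨Sum.inr t :: w, rfl⟩, .single b,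
              by simp [erase], by simp⟩
          · obtain ⟨v', hv'p, hv't, hv'e, hv'l⟩ := ih u' ⟨s, hs'⟩ h0
            refine ⟨Sum.inl b :: Sum.inr t :: v', ?_, .cons b t hv't,
              by simp [erase_inl_cons, erase_inr_cons, hv'e], ?_⟩
            · rcases hv'p with ⟨r, rfl⟩
              exact ⟨r, by simp⟩
            · have : 1 ≤ u'.length := by
                cases u' with
                | nil => exact absurd rfl h0
                | cons _ _ => simp
              simp only [List.length_cons, hv'l]
              omega

/-- Lift a nonempty factor of the erasure of a tagged word to a tagged
factor of odd length. -/
lemma infix_lift {W : List (Sym α)} (hW : IsTagged W) :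
    ∀ u : List α, u <:+: erase W → u ≠ [] →
    ∃ v, v <:+: W ∧ IsTagged v ∧ erase v = u ∧ v.length = 2 * u.length - 1 := by
  induction hW with
  | single a =>
      intro u hu hne
      have hsub : List.Sublist u [a] := by
        rw [erase_inl_cons, erase_nil] at hu
        exact hu.sublist
      rcases List.sublist_singleton.mp hsub with h | h
      · exact absurd h hne
      · subst h
        exact ⟨[Sum.inl a], List.infix_refl _, .single a, by simp [erase],
          by simp⟩
  | @cons a t w hw ih =>
      intro u hu hne
      rw [erase_inl_cons, erase_inr_cons] at hu
      rcases List.infix_cons_iff.mp hu with h | h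
      · have hW' : IsTagged (Sum.inl a :: Sum.inr t :: w) := .cons a t hw
        have h' : u <+: erase (Sum.inl a :: Sum.inr t :: w) := by
          rwa [erase_inl_cons, erase_inr_cons]
        obtain ⟨v, hvp, hvt, hve, hvl⟩ := prefix_lift hW' u h' hne
        exact ⟨v, hvp.isInfix, hvt, hve, hvl⟩
      · obtain ⟨v, hvi, hvt, hve, hvl⟩ := ih u h hne
        refine ⟨v, ?_, hvt, hve, hvl⟩
        rcases hvi with ⟨p, q, rfl⟩
        exact ⟨Sum.inl a :: Sum.inr t :: p, q, by simp⟩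

open Classical in
/-- Number of occurrences of the end-mark letter in a word. -/
noncomputable def cntHash (hash : α) : List (Sym α) → ℕ
  | [] => 0
  | s :: l => (if s = Sum.inl hash then 1 else 0) + cntHash hash l

lemma cntHash_append (hash : α) (u v : List (Sym α)) :
    cntHash hash (u ++ v) = cntHash hash u + cntHash hash v := by
  induction u with
  | nil => simp [cntHash]
  | cons s l ih => simp [cntHash, ih]; omega

lemma cntHash_inr_cons (hash : α) (t : Tagg) (l : List (Sym α)) :
    cntHash hash (Sum.inr t :: l) = cntHash hash l := by
  simp [cntHash]

lemma cntHash_eq_zero {hash : α} {x : List (Sym α)}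
    (h : Sum.inl hash ∉ x) : cntHash hash x = 0 := by
  induction x with
  | nil => rfl
  | cons s l ih =>
      simp only [List.mem_cons, not_or] at h
      simp [cntHash, ih h.2, if_neg (Ne.symm h.1)]

lemma not_mem_of_cntHash_eq_zero {hash : α} {x : List (Sym α)}
    (h : cntHash hash x = 0) : Sum.inl hash ∉ x := by
  induction x with
  | nil => simp
  | cons s l ih =>
      simp only [cntHash] at h
      by_cases hs : s = Sum.inl hash
      · rw [if_pos hs] at h; omega
      · rw [if_neg hs] at h
        simp only [List.mem_cons, not_or]
        exact ⟨fun he => hs he.symm, ih (by omega)⟩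

lemma rstep_cntHash {hash : α} {k : ℕ} {Φ : Set (List (Sym α))}
    {u v : List (Sym α)} (h : RStep hash k Φ u v) :
    cntHash hash u = cntHash hash v := by
  obtain ⟨w, x, z, s, hx, rfl, rfl, -, -⟩ := h
  have hx0 : cntHash hash x = 0 := cntHash_eq_zero hx.2.2
  simp [cntHash_append, cntHash_inr_cons, hx0]

lemma reduces_cntHash {hash : α} {k : ℕ} {Φ : Set (List (Sym α))}
    {u v : List (Sym α)} (h : Reduces hash k Φ u v) :
    cntHash hash u = cntHash hash v := by
  induction h with
  | refl => rfl
  | tail _ hstep ih => exact ih.trans (rstep_cntHash hstep)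

end Aux

/-- **Lemma 3.3 (Refinement over SLT)**: with `h = ⌈k/2⌉ = (k+1)/2` and
`F_h = σ(Φ)`, the `h`-strictly-locally-testable language `Loc(F_h)` contains
the maximal language `Red(Φ)`. -/
theorem red_subset_locPlain {α : Type} (hash : α) {k : ℕ} (hk : Odd k)
    (hk3 : 3 ≤ k) {Φ : Set (List (Sym α))} (hΦk : TaggedKWords k Φ)
    (hΦ : NonConflictual Φ) :
    Red hash k Φ ⊆ LocPlain hash ((k + 1) / 2) (erase '' Φ) := by
  rintro x ⟨w, ⟨hwt, hred⟩, rfl⟩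
  obtain ⟨j, hj⟩ := hk
  have hj1 : 1 ≤ j := by omega
  -- the wrapped word is tagged
  have hendw : IsTagged (endwFor hash k) := isTagged_hashWord _ _
  have hWt : IsTagged (wrap hash k w) :=
    IsTagged.append_tag _ hendw (IsTagged.append_tag _ hwt hendw)
  -- the wrapped word is not the final word
  have hne : wrap hash k w ≠ finalWord hash k := by
    intro he
    have hmem : (Sum.inr Tagg.lb : Sym α) ∈ wrap hash k w := by
      unfold wrap; simp
    rw [he] at hmem
    unfold finalWord at hmem
    rcases List.mem_append.mp hmem with h | h
    · rcases mem_hashWord h with h' | h' <;> simp at h'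
    · rcases List.mem_cons.mp h with h' | h'
      · simp at h'
      · rcases mem_hashWord h' with h'' | h'' <;> simp at h''
  -- hence at least one reduction step applies, giving local testability
  have hloc : wrap hash k w ∈ LocFull k Φ := by
    rcases hred.cases_head with heq | ⟨c, hst, -⟩
    · exact absurd heq hne
    · obtain ⟨_, _, _, _, _, _, _, hL, -⟩ := hst
      exact hL
  -- the terminal word contains no end-mark
  have hcnt : cntHash hash w = 0 := by
    have h1 := reduces_cntHash hred
    unfold wrap finalWord at h1
    simp only [cntHash_append, cntHash_inr_cons] at h1
    omega
  have hhw : hash ∉ erase w := by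
    intro hm
    rcases List.mem_filterMap.mp hm with ⟨s, hs, hgl⟩
    have : s = Sum.inl hash := by
      cases s with
      | inl a => simp [Sum.getLeft?] at hgl; rw [hgl]
      | inr t => simp [Sum.getLeft?] at hgl
    exact not_mem_of_cntHash_eq_zero hcnt (this ▸ hs)
  have hxne : erase w ≠ [] := erase_ne_nil hwt
  -- the erasure of the wrapped word
  have hrep : (k - 3) / 2 + 1 = (k + 1) / 2 - 1 := by omega
  have hEw : List.replicate ((k + 1) / 2 - 1) hash ++ erase w ++
      List.replicate ((k + 1) / 2 - 1) hash = erase (wrap hash k w) := by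
    unfold wrap endwFor
    simp [erase_append, erase_inr_cons, erase_hashWord, hrep,
      List.append_assoc]
  refine ⟨hxne, hhw, ?_⟩
  rintro u ⟨hul, hui⟩
  rw [hEw] at hui
  have hune : u ≠ [] := by
    intro h; rw [h] at hul; simp at hul; omega
  obtain ⟨v, hvi, hvt, hve, hvl⟩ := infix_lift hWt u hui hune
  have hvk : v.length = k := by rw [hvl, hul]; omega
  exact ⟨v, hloc.2 ⟨hvk, hvt, hvi⟩, hve⟩

end HOP
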